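/- Let K = ℤ[x₁,x₂,…] be the polynomial ring over ℤ in countably infinitely many commuting variables, let A be the K-algebra whose underlying K-module is K itself and whose multiplication is identically zero (ab = 0 for all a,b ∈ A), and let B be the K-subalgebra of A generated by the set of variables {x₁,x₂,…}. Then A is finitely presented as a K-algebra, the quotient K-module A/B is cyclic, but B is not finitely generated as a K-algebra. -/

import Mathlib

/-- The free non-unital associative `K`-algebra on `X`: the semigroup algebra of the free
semigroup `X⁺` over `K`. -/
abbrev FreeNUAlg (K X : Type*) [CommRing K] : Type _ := MonoidAlgebra K (FreeSemigroup X)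

/-- The two-sided ideal (as a `K`-submodule closed under left and right multiplication)
generated by a set in a non-unital `K`-algebra. -/
def idealSpan (K : Type*) {A : Type*} [CommRing K] [NonUnitalRing A] [Module K A]
    (s : Set A) : Submodule K A :=
  sInf {J : Submodule K A | s ⊆ J ∧ ∀ a b : A, b ∈ J → a * b ∈ J ∧ b * a ∈ J}

/-- A non-unital `K`-algebra is finitely generated if some finite subset generates it as a
`K`-algebra. -/
def NUAlgFG (K A : Type*) [CommRing K] [NonUnitalRing A] [Module K A]
    [IsScalarTower K A A] [SMulCommClass K A A] : Prop :=
  ∃ s : Finset A, NonUnitalAlgebra.adjoin K (s : Set A) = ⊤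

/-- A non-unital `K`-algebra is finitely presented if it is isomorphic to the quotient of a
free algebra `K⟨X⟩` on a finite set `X` by a finitely generated two-sided ideal, i.e. there
is a surjection from some `K⟨X⟩`, `X` finite, whose kernel is a finitely generated
two-sided ideal. -/
def NUAlgFP (K A : Type*) [CommRing K] [NonUnitalRing A] [Module K A]
    [IsScalarTower K A A] [SMulCommClass K A A] : Prop :=
  ∃ (n : ℕ) (f : FreeNUAlg K (Fin n) →ₙₐ[K] A),
    Function.Surjective f ∧
      ∃ s : Finset (FreeNUAlg K (Fin n)),
        ∀ x, f x = 0 ↔ x ∈ idealSpan K (s : Set (FreeNUAlg K (Fin n)))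

/-- `K = ℤ[x₁,x₂,…]`, the polynomial ring over `ℤ` in countably many commuting variables. -/
abbrev K16 : Type := MvPolynomial ℕ ℤ

/-- `A`: the `K`-module `K` itself, to be equipped with the identically zero multiplication. -/
def A16 : Type := MvPolynomial ℕ ℤ

noncomputable instance : AddCommGroup A16 := inferInstanceAs (AddCommGroup (MvPolynomial ℕ ℤ))
noncomputable instance : Module K16 A16 := inferInstanceAs (Module (MvPolynomial ℕ ℤ) (MvPolynomial ℕ ℤ))

/-- The identically zero multiplication on `A16`. -/
noncomputable instance : Mul A16 := ⟨fun _ _ => 0⟩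

theorem A16.mul_def (a b : A16) : a * b = 0 := rfl

noncomputable instance : NonUnitalRing A16 :=
  { (inferInstance : AddCommGroup A16), (inferInstance : Mul A16) with
    mul_assoc := fun a b c => by rw [A16.mul_def, A16.mul_def]
    left_distrib := fun a b c => by
      rw [A16.mul_def, A16.mul_def, A16.mul_def, add_zero]
    right_distrib := fun a b c => by
      rw [A16.mul_def, A16.mul_def, A16.mul_def, add_zero]
    zero_mul := fun a => rfl
    mul_zero := fun a => rfl }

instance : IsScalarTower K16 A16 A16 :=
  ⟨fun k a b => by
    show (k • a) * b = k • (a * b)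
    rw [A16.mul_def, A16.mul_def, smul_zero]⟩

instance : SMulCommClass K16 A16 A16 :=
  ⟨fun k a b => by
    show k • (a * b) = a * (k • b)
    rw [A16.mul_def, A16.mul_def, smul_zero]⟩

/-- The inclusion of the underlying set of `K = ℤ[x₁,x₂,…]` into `A16`. -/
def toA16 (p : MvPolynomial ℕ ℤ) : A16 := p

/-- `B`: the `K`-subalgebra of `A` generated by the set of variables `{x₁, x₂, …}`. -/
noncomputable def B16 : NonUnitalSubalgebra K16 A16 :=
  NonUnitalAlgebra.adjoin K16 (Set.range fun i : ℕ => toA16 (MvPolynomial.X i))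


open MvPolynomial FreeSemigroup

noncomputable section

/-- coefficient of a length ≥ 2 product at `of 0` vanishes -/
theorem mul_apply_of_zero (x y : FreeNUAlg K16 (Fin 1)) :
    (x * y).coeff (FreeSemigroup.of 0) = 0 := by
  rw [MonoidAlgebra.mul_apply]
  refine Finset.sum_eq_zero fun a _ => Finset.sum_eq_zero fun b _ => ?_
  show (if a * b = FreeSemigroup.of 0 then x.coeff a * y.coeff b else 0) = 0
  rw [if_neg fun h => ?_]
  have hl := congrArg FreeSemigroup.length h
  simp only [FreeSemigroup.length_mul, FreeSemigroup.length_of] at hl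
  have ha : 0 < a.length := Nat.succ_pos _
  have hb : 0 < b.length := Nat.succ_pos _
  omega

def f16 : FreeNUAlg K16 (Fin 1) →ₙₐ[K16] A16 :=
  { toFun := fun x => toA16 (x.coeff (FreeSemigroup.of 0))
    map_zero' := rfl
    map_add' := fun x y => rfl
    map_smul' := fun k x => rfl
    map_mul' := fun x y => by
      show toA16 ((x * y).coeff (FreeSemigroup.of 0)) = _
      rw [mul_apply_of_zero, A16.mul_def]; rfl }

theorem f16_surjective : Function.Surjective f16 := by
  intro a
  refine ⟨MonoidAlgebra.single (FreeSemigroup.of 0) (show K16 from a), ?_⟩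
  show toA16 ((MonoidAlgebra.single (FreeSemigroup.of 0) (show K16 from a)).coeff (FreeSemigroup.of 0)) = a
  rw [MonoidAlgebra.coeff_single, Finsupp.single_eq_same]
  rfl

def J16 : Submodule K16 (FreeNUAlg K16 (Fin 1)) where
  carrier := {x | x.coeff (FreeSemigroup.of 0) = 0}
  add_mem' := fun {a b} ha hb => by
    show (a + b).coeff (FreeSemigroup.of 0) = 0
    rw [MonoidAlgebra.coeff_add, Finsupp.add_apply, ha, hb, add_zero]
  zero_mem' := rfl
  smul_mem' := fun k x hx => by
    show (k • x).coeff (FreeSemigroup.of 0) = 0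
    rw [MonoidAlgebra.coeff_smul, Finsupp.smul_apply, hx, smul_zero]

theorem of_ne_sq : FreeSemigroup.of (0 : Fin 1) * FreeSemigroup.of 0 ≠ FreeSemigroup.of 0 := by
  intro h
  have hl := congrArg FreeSemigroup.length h
  simp only [FreeSemigroup.length_mul, FreeSemigroup.length_of] at hl
  omega

theorem single_mem_idealSpan (J : Submodule K16 (FreeNUAlg K16 (Fin 1)))
    (hs : MonoidAlgebra.single (FreeSemigroup.of (0 : Fin 1) * FreeSemigroup.of 0) (1 : K16) ∈ J)
    (hcl : ∀ a b : FreeNUAlg K16 (Fin 1), b ∈ J → a * b ∈ J ∧ b * a ∈ J)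
    (w : FreeSemigroup (Fin 1)) (k : K16) :
    w = FreeSemigroup.of 0 ∨ MonoidAlgebra.single w k ∈ J := by
  induction w using FreeSemigroup.recOnMul with
  | ih1 i =>
    left
    rw [Subsingleton.elim i 0]
  | ih2 i y _ ihy =>
    right
    rcases ihy with rfl | hy
    · rw [Subsingleton.elim i 0]
      have h1 : MonoidAlgebra.single (FreeSemigroup.of (0 : Fin 1) * FreeSemigroup.of 0) k
          = k • MonoidAlgebra.single (FreeSemigroup.of (0 : Fin 1) * FreeSemigroup.of 0) (1 : K16) := by
        rw [MonoidAlgebra.smul_single, smul_eq_mul, mul_one]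
      rw [h1]
      exact J.smul_mem _ hs
    · have h2 : MonoidAlgebra.single (FreeSemigroup.of i * y) k
          = MonoidAlgebra.single (FreeSemigroup.of i) (1 : K16) * MonoidAlgebra.single y k := by
        rw [MonoidAlgebra.single_mul_single, one_mul]
      rw [h2]
      exact (hcl _ _ hy).1

theorem ker_f16 (x : FreeNUAlg K16 (Fin 1)) :
    f16 x = 0 ↔ x ∈ idealSpan K16
      ({MonoidAlgebra.single (FreeSemigroup.of (0 : Fin 1) * FreeSemigroup.of 0) (1 : K16)} :
        Set (FreeNUAlg K16 (Fin 1))) := by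
  have hf : ∀ y : FreeNUAlg K16 (Fin 1), f16 y = 0 ↔ y.coeff (FreeSemigroup.of 0) = 0 := fun y => Iff.rfl
  rw [hf]
  constructor
  · intro hx
    rw [idealSpan, Submodule.mem_sInf]
    rintro J ⟨hs, hcl⟩
    have hs' : MonoidAlgebra.single (FreeSemigroup.of (0 : Fin 1) * FreeSemigroup.of 0) (1 : K16) ∈ J :=
      hs rfl
    clear hs
    induction x using MonoidAlgebra.induction with
    | zero => exact J.zero_mem
    | single_add w k g hg hk ih =>
      have hw : w ≠ FreeSemigroup.of 0 := by
        intro rfl_w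
        subst rfl_w
        rw [MonoidAlgebra.coeff_add, Finsupp.add_apply, MonoidAlgebra.coeff_single, Finsupp.single_eq_same, Finsupp.notMem_support_iff.1 hg,
          add_zero] at hx
        exact hk hx
      have hxg : g.coeff (FreeSemigroup.of 0) = 0 := by
        rw [MonoidAlgebra.coeff_add, Finsupp.add_apply, MonoidAlgebra.coeff_single, Finsupp.single_eq_of_ne' hw, zero_add] at hx
        exact hx
      have h1 : MonoidAlgebra.single w k ∈ J :=
        (single_mem_idealSpan J hs' hcl w k).resolve_left hw
      exact J.add_mem h1 (ih hxg)
  · intro hx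
    have hJ : idealSpan K16
        ({MonoidAlgebra.single (FreeSemigroup.of (0 : Fin 1) * FreeSemigroup.of 0) (1 : K16)} :
          Set (FreeNUAlg K16 (Fin 1))) ≤ J16 := by
      apply sInf_le
      constructor
      · rintro y rfl
        exact Finsupp.single_eq_of_ne' of_ne_sq
      · intro a b _
        exact ⟨mul_apply_of_zero a b, mul_apply_of_zero b a⟩
    exact hJ hx

theorem part1 : NUAlgFP K16 A16 :=
  ⟨1, f16, f16_surjective,
    ⟨{MonoidAlgebra.single (FreeSemigroup.of (0 : Fin 1) * FreeSemigroup.of 0) (1 : K16)},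
      fun x => by
        rw [ker_f16 x, Finset.coe_singleton]⟩⟩

def toK16 (a : A16) : K16 := a

theorem toK16_add (a b : A16) : toK16 (a + b) = toK16 a + toK16 b := rfl
theorem toK16_smul (k : K16) (a : A16) : toK16 (k • a) = k * toK16 a := rfl
theorem toK16_zero : toK16 0 = 0 := rfl
theorem toK16_toA16 (p : K16) : toK16 (toA16 p) = p := rfl

theorem adjoin_eq_span_of_zero_mul {R A : Type*} [CommRing R] [NonUnitalRing A] [Module R A]
    [IsScalarTower R A A] [SMulCommClass R A A] (h : ∀ a b : A, a * b = 0) (s : Set A) :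
    (NonUnitalAlgebra.adjoin R s).toSubmodule = Submodule.span R s := by
  apply le_antisymm
  · intro x hx
    induction hx using NonUnitalAlgebra.adjoin_induction with
    | mem x hx => exact Submodule.subset_span hx
    | add x y _ _ hx hy => exact add_mem hx hy
    | zero => exact zero_mem _
    | mul x y _ _ _ _ => rw [h]; exact zero_mem _
    | smul r x _ hx => exact Submodule.smul_mem _ _ hx
  · rw [Submodule.span_le]
    exact NonUnitalAlgebra.subset_adjoin R

theorem B16_toSubmodule :
    B16.toSubmodule = Submodule.span K16 (Set.range fun i : ℕ => toA16 (MvPolynomial.X i)) :=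
  adjoin_eq_span_of_zero_mul A16.mul_def _

theorem mem_span_X_add_aux (q r : MvPolynomial ℕ ℤ) :
    q + r - C (constantCoeff (q + r)) = (q - C (constantCoeff q)) + (r - C (constantCoeff r)) := by
  rw [map_add, map_add]
  ring

theorem mem_span_X (p : K16) (h : constantCoeff p = 0) :
    toA16 p ∈ Submodule.span K16 (Set.range fun i : ℕ => toA16 (MvPolynomial.X i)) := by
  have key : ∀ q : K16, toA16 (q - C (constantCoeff q)) ∈
      Submodule.span K16 (Set.range fun i : ℕ => toA16 (MvPolynomial.X i)) := by
    intro q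
    induction q using MvPolynomial.induction_on with
    | C r => rw [constantCoeff_C, sub_self]; exact zero_mem _
    | add q r hq hr =>
      have : toA16 (q + r - C (constantCoeff (q + r)))
          = toA16 (q - C (constantCoeff q)) + toA16 (r - C (constantCoeff r)) := by
        exact congrArg toA16 (mem_span_X_add_aux q r)
      rw [this]
      exact add_mem hq hr
    | mul_X q i hq =>
      have h0 : toA16 (q * X i - C (constantCoeff (q * X i))) = q • toA16 (X i) := by
        show toA16 _ = toA16 (q * X i)
        rw [map_mul, constantCoeff_X, mul_zero, map_zero, sub_zero]
      rw [h0]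
      exact Submodule.smul_mem _ _ (Submodule.subset_span ⟨i, rfl⟩)
  have := key p
  rw [h, map_zero, sub_zero] at this
  exact this

theorem cc_eq_zero_of_mem_span (S : Set A16)
    (hS : ∀ x ∈ S, constantCoeff (toK16 x) = 0)
    (x : A16) (hx : x ∈ Submodule.span K16 S) : constantCoeff (toK16 x) = 0 := by
  induction hx using Submodule.span_induction with
  | mem y hy => exact hS y hy
  | zero => rw [toK16_zero, map_zero]
  | add y z _ _ hy hz => rw [toK16_add, map_add, hy, hz, add_zero]
  | smul k y _ hy => rw [toK16_smul, map_mul, hy, mul_zero]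

theorem part2 : ∃ m : A16 ⧸ B16.toSubmodule, Submodule.span K16 {m} = ⊤ := by
  refine ⟨Submodule.Quotient.mk (toA16 1), ?_⟩
  rw [eq_top_iff]
  rintro x -
  obtain ⟨a, rfl⟩ := Submodule.Quotient.mk_surjective _ x
  rw [Submodule.mem_span_singleton]
  refine ⟨C (constantCoeff (toK16 a)), ?_⟩
  rw [← Submodule.Quotient.mk_smul, Submodule.Quotient.eq, B16_toSubmodule]
  have h1 : (C (constantCoeff (toK16 a)) : K16) • toA16 1 - a
      = toA16 (C (constantCoeff (toK16 a)) * 1 - toK16 a) := rfl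
  rw [h1]
  apply mem_span_X
  rw [map_sub, map_mul, map_one, mul_one, constantCoeff_C, sub_self]

theorem eval_eq_zero_aux (v : ℕ → ℤ) (p : K16) (h0 : constantCoeff p = 0)
    (hv : ∀ i ∈ p.vars, v i = 0) : eval v p = 0 := by
  rw [eval_eq]
  apply Finset.sum_eq_zero
  intro d hd
  by_cases hd0 : d = 0
  · subst hd0
    have h1 : coeff 0 p = 0 := h0
    rw [h1, zero_mul]
  · obtain ⟨i, hi⟩ := Finsupp.support_nonempty_iff.2 hd0
    have hvar : i ∈ p.vars := (mem_vars i).2 ⟨d, hd, hi⟩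
    rw [Finset.prod_eq_zero hi, mul_zero]
    rw [hv i hvar]
    exact zero_pow (Finsupp.mem_support_iff.1 hi)

theorem eval_zero_on_span (v : ℕ → ℤ) (S : Set A16) (hS : ∀ x ∈ S, eval v (toK16 x) = 0) :
    ∀ x ∈ Submodule.span K16 S, eval v (toK16 x) = 0 := by
  intro x hx
  induction hx using Submodule.span_induction with
  | mem y hy => exact hS y hy
  | zero => rw [toK16_zero, map_zero]
  | add y z _ _ hy hz => rw [toK16_add, map_add, hy, hz, add_zero]
  | smul k y _ hy => rw [toK16_smul, map_mul, hy, mul_zero]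

theorem part3 : ¬ NUAlgFG K16 B16 := by
  rintro ⟨s, hs⟩
  have hBmul : ∀ a b : ↥B16, a * b = 0 := fun a b => Subtype.ext (A16.mul_def a.1 b.1)
  have h1 : (NonUnitalAlgebra.adjoin K16 (s : Set ↥B16)).toSubmodule
      = Submodule.span K16 (s : Set ↥B16) := adjoin_eq_span_of_zero_mul hBmul _
  rw [hs] at h1
  have h1' : Submodule.span K16 (s : Set ↥B16) = ⊤ := by rw [← h1]; rfl
  have h2 : Submodule.map B16.toSubmodule.subtype (Submodule.span K16 (s : Set ↥B16))
      = B16.toSubmodule := by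
    rw [h1', Submodule.map_top, Submodule.range_subtype]
  set N : ℕ := (s.sup fun b => ((toK16 (b : A16)).vars.sup id)) + 1 with hN
  have hXN : toA16 (MvPolynomial.X N) ∈
      Submodule.map B16.toSubmodule.subtype (Submodule.span K16 (s : Set ↥B16)) := by
    rw [h2, B16_toSubmodule]
    exact Submodule.subset_span ⟨N, rfl⟩
  rw [Submodule.map_span] at hXN
  set v : ℕ → ℤ := fun i => if i = N then 1 else 0 with hv
  have hval : ∀ x ∈ (B16.toSubmodule.subtype '' (s : Set ↥B16)), eval v (toK16 x) = 0 := by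
    rintro x ⟨b, hb, rfl⟩
    apply eval_eq_zero_aux
    · refine cc_eq_zero_of_mem_span (Set.range fun i : ℕ => toA16 (MvPolynomial.X i)) ?_ _ ?_
      · rintro y ⟨i, rfl⟩
        rw [toK16_toA16, constantCoeff_X]
      · rw [← B16_toSubmodule]
        exact b.2
    · intro i hi
      have hle1 : i ≤ (toK16 (b : A16)).vars.sup id := Finset.le_sup (f := id) hi
      have hle2 : ((toK16 (b : A16)).vars.sup id) ≤
          s.sup fun b => ((toK16 (b : A16)).vars.sup id) :=
        Finset.le_sup (f := fun b : ↥B16 => ((toK16 (b : A16)).vars.sup id)) (Finset.mem_coe.1 hb)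
      show (if i = N then (1:ℤ) else 0) = 0
      rw [if_neg]
      omega
  have hz := eval_zero_on_span v _ hval _ hXN
  rw [toK16_toA16, eval_X] at hz
  simp only [hv, if_pos rfl] at hz
  exact one_ne_zero hz


/-- Let `K = ℤ[x₁,x₂,…]`, let `A` be the `K`-algebra whose underlying
`K`-module is `K` with identically zero multiplication, and let `B` be the `K`-subalgebra
of `A` generated by the variables. Then `A` is finitely presented as a `K`-algebra, the
quotient `K`-module `A/B` is cyclic, but `B` is not finitely generated as a `K`-algebra. -/
theorem example16 :
    NUAlgFP K16 A16 ∧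
    (∃ m : A16 ⧸ B16.toSubmodule, Submodule.span K16 {m} = ⊤) ∧
    ¬ NUAlgFG K16 B16 := by
  exact ⟨part1, part2, part3⟩

end
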